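/- Let A be a skew brace and I an ideal of A. Then the additive subgroup [I,A]_Grp generated by {a*b, b*a, c + b*a - c : a ∈ I, b, c ∈ A} is an ideal of A. -/

import Mathlib

/-- A skew brace: a type with an additive group structure and a second group
operation `circ` (with inverse `cinv` and the same identity `0`) satisfying the
skew brace compatibility law `a ∘ (b + c) = a ∘ b - a + a ∘ c`. -/
class SkewBrace (A : Type*) extends AddGroup A where
  circ : A → A → A
  cinv : A → A
  circ_assoc : ∀ a b c : A, circ (circ a b) c = circ a (circ b c)
  zero_circ : ∀ a : A, circ 0 a = a
  circ_zero : ∀ a : A, circ a 0 = a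
  cinv_circ : ∀ a : A, circ (cinv a) a = 0
  circ_cinv : ∀ a : A, circ a (cinv a) = 0
  compat : ∀ a b c : A, circ a (b + c) = circ a b - a + circ a c

namespace SkewBrace

variable {A : Type*} [SkewBrace A]

/-- The star operation `a * b = -a + a ∘ b - b`. -/
def star (a b : A) : A := -a + circ a b - b

/-- The right distributor `[a,b,c] = (a+b)∘c - b∘c + c - a∘c`. -/
def rd (a b c : A) : A := circ (a + b) c - circ b c + c - circ a c

/-- An ideal of a skew brace: a normal additive subgroup closed under the
star operation on both sides. -/
def IsIdeal (I : AddSubgroup A) : Prop :=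
  (∀ a : A, ∀ x ∈ I, a + x - a ∈ I) ∧
  (∀ a : A, ∀ x ∈ I, star a x ∈ I) ∧
  (∀ a : A, ∀ x ∈ I, star x a ∈ I)

/-- `Z_R(A)`: additively central elements annihilating all right distributors. -/
def ZR (A : Type*) [SkewBrace A] : Set A :=
  {z | (∀ a : A, z + a = a + z) ∧ ∀ b c : A, rd z b c = 0 ∧ rd b z c = 0 ∧ rd b c z = 0}

end SkewBrace

open SkewBrace


/-- Key identity: conjugation of `star i b` by `g`. -/
lemma star_conj_key {A : Type*} [SkewBrace A] (i g b : A) :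
    g + SkewBrace.star i b - g = -(SkewBrace.star i g) + SkewBrace.star i (g + b) := by
  simp only [SkewBrace.star, SkewBrace.compat, sub_eq_add_neg, neg_add_rev, neg_neg,
    add_assoc, neg_add_cancel_left, add_neg_cancel_left]

theorem stmt1 {A : Type*} [SkewBrace A] (I : AddSubgroup A) (hI : IsIdeal I) :
    IsIdeal (AddSubgroup.closure
      {x : A | ∃ a ∈ I, ∃ b c : A, x = star a b ∨ x = star b a ∨ x = c + star b a - c}) := by
  set S : Set A := {x : A | ∃ a ∈ I, ∃ b c : A, x = star a b ∨ x = star b a ∨ x = c + star b a - c}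
    with hS
  have hSI : S ⊆ (I : Set A) := by
    rintro x ⟨a, ha, b, c, h | h | h⟩
    · exact h ▸ hI.2.2 b a ha
    · exact h ▸ hI.2.1 b a ha
    · exact h ▸ hI.1 c _ (hI.2.1 b a ha)
  have hJI : ∀ x ∈ AddSubgroup.closure S, x ∈ I := fun x hx =>
    (AddSubgroup.closure_le I).2 hSI hx
  refine ⟨?_, ?_, ?_⟩
  · intro g x hx
    induction hx using AddSubgroup.closure_induction with
    | mem y hy =>
      obtain ⟨a, ha, b, c, h | h | h⟩ := hy
      · subst h
        rw [star_conj_key]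
        exact AddSubgroup.add_mem _
          (AddSubgroup.neg_mem _ (AddSubgroup.subset_closure ⟨a, ha, g, 0, Or.inl rfl⟩))
          (AddSubgroup.subset_closure ⟨a, ha, g + b, 0, Or.inl rfl⟩)
      · subst h
        exact AddSubgroup.subset_closure ⟨a, ha, b, g, Or.inr (Or.inr rfl)⟩
      · subst h
        have : g + (c + star b a - c) - g = (g + c) + star b a - (g + c) := by
          simp [sub_eq_add_neg, add_assoc]
        rw [this]
        exact AddSubgroup.subset_closure ⟨a, ha, b, g + c, Or.inr (Or.inr rfl)⟩
    | zero => simpa using (AddSubgroup.closure S).zero_mem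
    | add x y hx hy ihx ihy =>
      have : g + (x + y) - g = (g + x - g) + (g + y - g) := by
        simp [sub_eq_add_neg, add_assoc]
      rw [this]; exact AddSubgroup.add_mem _ ihx ihy
    | neg x hx ihx =>
      have : g + (-x) - g = -(g + x - g) := by
        simp [sub_eq_add_neg, add_assoc]
      rw [this]; exact AddSubgroup.neg_mem _ ihx
  · intro a x hx
    exact AddSubgroup.subset_closure ⟨x, hJI x hx, a, 0, Or.inr (Or.inl rfl)⟩
  · intro a x hx
    exact AddSubgroup.subset_closure ⟨x, hJI x hx, a, 0, Or.inl rfl⟩
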